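/- Let a group G act properly by isometries on a proper geodesic metric space (Y,d) with basepoint o, and let H ≤ G be a contracting subgroup, i.e. H is infinite and the orbit H·o is a contracting subset of Y. Then H has finite index in its normalizer N_G(H), and consequently N_G(H) is also a contracting subgroup. -/

import Mathlib

open Metric Set Filter

/-- A geodesic segment in a metric space, parametrized by arc length on `[0, len]`. -/
structure GeodesicSegment (Y : Type*) [MetricSpace Y] where
  len : ℝ
  len_nonneg : 0 ≤ len
  f : ℝ → Y
  isom : ∀ s ∈ Set.Icc (0 : ℝ) len, ∀ t ∈ Set.Icc (0 : ℝ) len, dist (f s) (f t) = |s - t|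

namespace GeodesicSegment

variable {Y : Type*} [MetricSpace Y]

/-- The initial point of a geodesic segment. -/
def source (γ : GeodesicSegment Y) : Y := γ.f 0

/-- The terminal point of a geodesic segment. -/
def target (γ : GeodesicSegment Y) : Y := γ.f γ.len

/-- The image of a geodesic segment. -/
def image (γ : GeodesicSegment Y) : Set Y := γ.f '' Set.Icc 0 γ.len

end GeodesicSegment

/-- A metric space is geodesic if any two points are joined by a geodesic segment. -/
def GeodesicSpace (Y : Type*) [MetricSpace Y] : Prop :=
  ∀ x y : Y, ∃ γ : GeodesicSegment Y, γ.source = x ∧ γ.target = y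

/-- Nearest-point projection of a point to a subset. -/
def proj {Y : Type*} [MetricSpace Y] (X : Set Y) (y : Y) : Set Y :=
  {x | x ∈ X ∧ dist y x = Metric.infDist y X}

/-- Nearest-point projection of a set to a subset. -/
def projSet {Y : Type*} [MetricSpace Y] (X A : Set Y) : Set Y :=
  ⋃ a ∈ A, proj X a

/-- `X` is `C`-contracting: any geodesic at distance at least `C` from `X`
has projection to `X` of diameter at most `C`. -/
def IsContractingWith {Y : Type*} [MetricSpace Y] (C : ℝ) (X : Set Y) : Prop :=
  ∀ γ : GeodesicSegment Y, (∀ p ∈ γ.image, C ≤ Metric.infDist p X) →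
    Metric.diam (projSet X γ.image) ≤ C

/-- `X` is contracting (with respect to geodesics). -/
def IsContracting {Y : Type*} [MetricSpace Y] (X : Set Y) : Prop :=
  ∃ C : ℝ, 1 ≤ C ∧ IsContractingWith C X

/-- The orbit of the basepoint under the cyclic group generated by `h`. -/
def cyclicOrbit {Y G : Type*} [MetricSpace Y] [Group G] [MulAction G Y]
    (o : Y) (h : G) : Set Y :=
  {y | ∃ n : ℤ, y = h ^ n • o}

/-- `g` is a contracting element for the action with basepoint `o`. -/
def IsContractingElement {Y G : Type*} [MetricSpace Y] [Group G] [MulAction G Y]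
    (o : Y) (g : G) : Prop :=
  ¬ IsOfFinOrder g ∧ IsContracting (cyclicOrbit o g) ∧
    ∃ c : ℝ, 1 ≤ c ∧ ∀ m n : ℤ,
      (|m - n| : ℝ) / c - c ≤ dist (g ^ m • o) (g ^ n • o) ∧
        dist (g ^ m • o) (g ^ n • o) ≤ c * (|m - n| : ℝ) + c

universe v

/-- A group is non-elementary if it has no finite-index subgroup isomorphic to `ℤ`
or to the trivial group. -/
def NonElementary (G : Type*) [Group G] : Prop :=
  ¬ ∃ H : Subgroup G, H.index ≠ 0 ∧
    (Nonempty (H ≃* Multiplicative ℤ) ∨ Nonempty (H ≃* PUnit.{v+1}))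

/-- The critical exponent of a subset `Γ ⊆ G` for the action with basepoint `o`. -/
noncomputable def critExp {Y G : Type*} [MetricSpace Y] [Group G] [MulAction G Y]
    (o : Y) (Γ : Set G) : ℝ :=
  Filter.limsup
    (fun n : ℕ => Real.log ({g ∈ Γ | dist o (g • o) ≤ (n : ℝ)}.ncard) / (n : ℝ))
    Filter.atTop

/-- The concave region `𝒪_M`: elements `g` such that some geodesic between
`B(o,M)` and `B(g·o,M)` has its interior outside the `M`-neighborhood of the orbit. -/
def concaveRegion {Y : Type*} (G : Type*) [MetricSpace Y] [Group G] [MulAction G Y]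
    (o : Y) (M : ℝ) : Set G :=
  {g | ∃ γ : GeodesicSegment Y,
    γ.source ∈ Metric.closedBall o M ∧ γ.target ∈ Metric.closedBall (g • o) M ∧
    ∀ t ∈ Set.Ioo (0 : ℝ) γ.len, M < Metric.infDist (γ.f t) (MulAction.orbit G o)}

/-- Statistically convex-cocompact (SCC) action. -/
def IsSCC {Y : Type*} (G : Type*) [MetricSpace Y] [Group G] [MulAction G Y]
    (o : Y) : Prop :=
  ∃ M : ℝ, 0 < M ∧ critExp o (concaveRegion G o M) < critExp o (Set.univ : Set G)

/-- A geodesic contains no `(ε, f)`-barrier. -/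
def BarrierFree {Y G : Type*} [MetricSpace Y] [Group G] [MulAction G Y]
    (o : Y) (ε : ℝ) (f : G) (γ : GeodesicSegment Y) : Prop :=
  ¬ ∃ h : G, Metric.infDist (h • o) γ.image ≤ ε ∧
      Metric.infDist ((h * f) • o) γ.image ≤ ε

/-- The set `𝒱_{ε,M,f}` of `(ε, M, f)`-barrier-free elements. -/
def barrierFreeSet {Y G : Type*} [MetricSpace Y] [Group G] [MulAction G Y]
    (o : Y) (ε M : ℝ) (f : G) : Set G :=
  {g | ∃ γ : GeodesicSegment Y, γ.source ∈ Metric.closedBall o M ∧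
    γ.target ∈ Metric.closedBall (g • o) M ∧ BarrierFree o ε f γ}

/-- The subgroup-like set `E(h)` of elements commensurating the orbit of `⟨h⟩`. -/
def Egroup {Y G : Type*} [MetricSpace Y] [Group G] [MulAction G Y]
    (o : Y) (h : G) : Set G :=
  {g | ∃ r : ℝ, 0 < r ∧
    (∀ y ∈ (g • ·) '' cyclicOrbit o h, Metric.infDist y (cyclicOrbit o h) ≤ r) ∧
    (∀ y ∈ cyclicOrbit o h, Metric.infDist y ((g • ·) '' cyclicOrbit o h) ≤ r)}

/-- The axis `Ax(h) = E(h)·o` of a contracting element. -/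
def axisSet {Y G : Type*} [MetricSpace Y] [Group G] [MulAction G Y]
    (o : Y) (h : G) : Set Y :=
  (fun g : G => g • o) '' Egroup o h
open Metric Set Bornology

namespace ContrAux

variable {Y : Type*} [MetricSpace Y]

/-- Restriction of a geodesic segment to a subinterval `[a, b]`. -/
def restrict (γ : GeodesicSegment Y) (a b : ℝ) (h0 : 0 ≤ a) (hab : a ≤ b)
    (hb : b ≤ γ.len) : GeodesicSegment Y where
  len := b - a
  len_nonneg := by linarith
  f := fun t => γ.f (a + t)
  isom := by
    intro s hs t ht
    rw [γ.isom (a + s) ⟨by linarith [hs.1], by linarith [hs.2]⟩ (a + t)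
      ⟨by linarith [ht.1], by linarith [ht.2]⟩]
    congr 1
    ring

theorem mem_restrict_image (γ : GeodesicSegment Y) {a b : ℝ} (h0 : 0 ≤ a) (hab : a ≤ b)
    (hb : b ≤ γ.len) {t : ℝ} (ht : t ∈ Set.Icc a b) :
    γ.f t ∈ (restrict γ a b h0 hab hb).image := by
  refine ⟨t - a, ?_, ?_⟩
  · show t - a ∈ Set.Icc (0:ℝ) (b - a)
    exact ⟨by linarith [ht.1], by linarith [ht.2]⟩
  · show γ.f (a + (t - a)) = γ.f t
    congr 1
    ring

theorem restrict_image_subset (γ : GeodesicSegment Y) {a b : ℝ} (h0 : 0 ≤ a) (hab : a ≤ b)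
    (hb : b ≤ γ.len) : (restrict γ a b h0 hab hb).image ⊆ γ.image := by
  rintro x ⟨t, ht, rfl⟩
  have ht' : t ∈ Set.Icc (0:ℝ) (b - a) := ht
  exact ⟨a + t, ⟨by linarith [ht'.1], by linarith [ht'.2]⟩, rfl⟩

theorem dist_f (γ : GeodesicSegment Y) {s t : ℝ} (hs : s ∈ Set.Icc (0:ℝ) γ.len)
    (ht : t ∈ Set.Icc (0:ℝ) γ.len) : dist (γ.f s) (γ.f t) = |s - t| :=
  γ.isom s hs t ht

theorem image_bounded (γ : GeodesicSegment Y) : IsBounded γ.image := by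
  have h0 : (0:ℝ) ∈ Set.Icc (0:ℝ) γ.len := ⟨le_refl _, γ.len_nonneg⟩
  refine (Metric.isBounded_iff_subset_closedBall (γ.f 0)).2 ⟨γ.len, ?_⟩
  rintro x ⟨t, ht, rfl⟩
  have h1 := dist_f γ h0 ht
  simp only [Metric.mem_closedBall]
  rw [dist_comm, h1, abs_of_nonpos (by linarith [ht.1])]
  linarith [ht.2]

/-- 1-Lipschitz property of distance-to-a-set along a geodesic. -/
theorem infDist_f_le (γ : GeodesicSegment Y) (X : Set Y) {s t : ℝ}
    (hs : s ∈ Set.Icc (0:ℝ) γ.len) (ht : t ∈ Set.Icc (0:ℝ) γ.len) :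
    infDist (γ.f s) X ≤ infDist (γ.f t) X + |s - t| := by
  have h := Metric.infDist_le_infDist_add_dist (x := γ.f s) (y := γ.f t) (s := X)
  rwa [dist_f γ hs ht] at h

theorem mem_projSet {X A : Set Y} {a x : Y} (ha : a ∈ A) (hx : x ∈ proj X a) :
    x ∈ projSet X A :=
  Set.mem_biUnion ha hx

theorem projSet_bounded {X A : Set Y} (hX : X.Nonempty) (hA : IsBounded A) :
    IsBounded (projSet X A) := by
  obtain ⟨x0, hx0⟩ := hX
  rcases A.eq_empty_or_nonempty with rfl | ⟨a0, ha0⟩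
  · simp [projSet]
  obtain ⟨r, hr⟩ := (Metric.isBounded_iff_subset_closedBall a0).1 hA
  refine (Metric.isBounded_iff_subset_closedBall a0).2 ⟨r + r + dist a0 x0, ?_⟩
  rintro x hx
  simp only [projSet, Set.mem_iUnion] at hx
  obtain ⟨a, ha, hax⟩ := hx
  have h1 : dist a x = infDist a X := hax.2
  have h2 : infDist a X ≤ dist a x0 := Metric.infDist_le_dist_of_mem hx0
  have h3 : dist a a0 ≤ r := hr ha
  have h4 : dist a x0 ≤ dist a a0 + dist a0 x0 := dist_triangle _ _ _
  have h5 : dist x a0 ≤ dist x a + dist a a0 := dist_triangle _ _ _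
  simp only [Metric.mem_closedBall]
  rw [dist_comm x a] at h5
  linarith

/-- Two projection points of points on a "far" geodesic are `C`-close. -/
theorem dist_proj_le {C : ℝ} {X : Set Y} (h : IsContractingWith C X) (hX : X.Nonempty)
    (γ : GeodesicSegment Y) (hfar : ∀ p ∈ γ.image, C ≤ infDist p X)
    {a b xa xb : Y} (ha : a ∈ γ.image) (hb : b ∈ γ.image)
    (hxa : xa ∈ proj X a) (hxb : xb ∈ proj X b) : dist xa xb ≤ C := by
  have hd := h γ hfar
  have hbd : IsBounded (projSet X γ.image) := projSet_bounded hX (image_bounded γ)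
  exact le_trans (Metric.dist_le_diam_of_mem hbd (mem_projSet ha hxa) (mem_projSet hb hxb)) hd

/-- Existence of projections for locally finite sets. -/
theorem exists_proj {X : Set Y} (hne : X.Nonempty)
    (hfin : ∀ y : Y, ∀ r : ℝ, {x ∈ X | dist y x ≤ r}.Finite) (y : Y) :
    ∃ x, x ∈ proj X y := by
  obtain ⟨x0, hx0⟩ := hne
  set B := {x ∈ X | dist y x ≤ dist y x0} with hB
  have hBfin : B.Finite := hfin y _
  have hBne : B.Nonempty := ⟨x0, hx0, le_refl _⟩
  obtain ⟨x, hxB, hxmin⟩ := Set.exists_min_image B (fun x => dist y x) hBfin hBne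
  refine ⟨x, hxB.1, le_antisymm ?_ (Metric.infDist_le_dist_of_mem hxB.1)⟩
  by_contra hlt
  push_neg at hlt
  obtain ⟨z, hz, hzlt⟩ := (Metric.infDist_lt_iff ⟨x0, hx0⟩).1 hlt
  have hzB : z ∈ B := ⟨hz, le_trans hzlt.le (hxmin x0 ⟨hx0, le_refl _⟩)⟩
  exact absurd (hxmin z hzB) (not_le.2 hzlt)

end ContrAux
namespace ContrAux

variable {Y : Type*} [MetricSpace Y]

open Metric Set Bornology

theorem F_continuousOn (γ : GeodesicSegment Y) (X : Set Y) :
    ContinuousOn (fun s => infDist (γ.f s) X) (Set.Icc (0:ℝ) γ.len) := by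
  have hlip : LipschitzOnWith 1 γ.f (Set.Icc (0:ℝ) γ.len) := by
    apply LipschitzOnWith.of_dist_le_mul
    intro s hs t ht
    rw [dist_f γ hs ht, Real.dist_eq]
    simp
  exact (Metric.continuous_infDist_pt X).comp_continuousOn hlip.continuousOn

theorem proj_image {φ : Y → Y} (hφ : Isometry φ) (X : Set Y) (w : Y) :
    proj (φ '' X) (φ w) = φ '' proj X w := by
  ext x
  constructor
  · rintro ⟨⟨u, hu, rfl⟩, hd⟩
    rw [Metric.infDist_image hφ, hφ.dist_eq] at hd
    exact ⟨u, ⟨hu, hd⟩, rfl⟩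
  · rintro ⟨u, ⟨hu, hd⟩, rfl⟩
    refine ⟨⟨u, hu, rfl⟩, ?_⟩
    rw [Metric.infDist_image hφ, hφ.dist_eq]
    exact hd

/-- Quasiconvexity: a geodesic with endpoints in a contracting set stays `4C`-close to it. -/
theorem quasiconvex {C : ℝ} {X : Set Y} (hC : 1 ≤ C) (h : IsContractingWith C X)
    (hproj : ∀ y : Y, ∃ x, x ∈ proj X y)
    (γ : GeodesicSegment Y) (hsrc : γ.source ∈ X) (htgt : γ.target ∈ X) :
    ∀ t ∈ Set.Icc (0:ℝ) γ.len, infDist (γ.f t) X ≤ 4 * C := by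
  intro t htI
  have hne : X.Nonempty := ⟨γ.source, hsrc⟩
  set F : ℝ → ℝ := fun s => infDist (γ.f s) X with hF
  by_cases hc : F t ≤ C
  · linarith
  push_neg at hc
  have htlen : t ≤ γ.len := htI.2
  have ht0 : 0 ≤ t := htI.1
  -- the set of "close" parameters before t
  set Ta : Set ℝ := Set.Icc (0:ℝ) t ∩ F ⁻¹' (Set.Iic C) with hTa
  have hTa_closed : IsClosed Ta := by
    apply ContinuousOn.preimage_isClosed_of_isClosed
      ((F_continuousOn γ X).mono (Set.Icc_subset_Icc le_rfl htlen)) isClosed_Icc isClosed_Iic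
  have h0Ta : (0:ℝ) ∈ Ta := by
    refine ⟨⟨le_rfl, ht0⟩, ?_⟩
    have : F 0 = 0 := Metric.infDist_zero_of_mem hsrc
    simp only [Set.mem_preimage, Set.mem_Iic, this]
    linarith
  have hTa_bdd : BddAbove Ta := ⟨t, fun s hs => hs.1.2⟩
  set a := sSup Ta with ha
  have haTa : a ∈ Ta := hTa_closed.csSup_mem ⟨0, h0Ta⟩ hTa_bdd
  have haI : a ∈ Set.Icc (0:ℝ) t := haTa.1
  have halt : a < t := by
    rcases eq_or_lt_of_le haI.2 with heq | hlt
    · rw [heq] at haTa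
      exact absurd haTa.2 (not_le.2 hc)
    · exact hlt
  have hgta : ∀ s, a < s → s ≤ t → C < F s := by
    intro s h1 h2
    by_contra hcon
    push_neg at hcon
    exact absurd (le_csSup hTa_bdd ⟨⟨le_trans haI.1 h1.le, h2⟩, hcon⟩) (not_le.2 h1)
  have haIcc : a ∈ Set.Icc (0:ℝ) γ.len := ⟨haI.1, le_trans haI.2 htlen⟩
  have haC : C ≤ F a := by
    apply le_of_forall_pos_le_add
    intro ε hε
    set s := min t (a + ε) with hs
    have hs1 : a < s := lt_min halt (by linarith)
    have hs2 : s ≤ t := min_le_left _ _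
    have hsIcc : s ∈ Set.Icc (0:ℝ) γ.len := ⟨le_trans haI.1 hs1.le, le_trans hs2 htlen⟩
    have hFs : C < F s := hgta s hs1 hs2
    have hlips : F s ≤ F a + |s - a| := infDist_f_le γ X hsIcc haIcc
    rw [abs_of_nonneg (by linarith)] at hlips
    have : s - a ≤ ε := by
      have := min_le_right t (a + ε)
      simp only [hs] at *
      linarith
    linarith
  -- the set of "close" parameters after t
  set Tb : Set ℝ := Set.Icc t γ.len ∩ F ⁻¹' (Set.Iic C) with hTb
  have hTb_closed : IsClosed Tb := by
    apply ContinuousOn.preimage_isClosed_of_isClosed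
      ((F_continuousOn γ X).mono (Set.Icc_subset_Icc ht0 le_rfl)) isClosed_Icc isClosed_Iic
  have hlenTb : γ.len ∈ Tb := by
    refine ⟨⟨htlen, le_rfl⟩, ?_⟩
    have : F γ.len = 0 := Metric.infDist_zero_of_mem htgt
    simp only [Set.mem_preimage, Set.mem_Iic, this]
    linarith
  have hTb_bdd : BddBelow Tb := ⟨t, fun s hs => hs.1.1⟩
  set b := sInf Tb with hb
  have hbTb : b ∈ Tb := hTb_closed.csInf_mem ⟨γ.len, hlenTb⟩ hTb_bdd
  have hbI : b ∈ Set.Icc t γ.len := hbTb.1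
  have hblt : t < b := by
    rcases eq_or_lt_of_le hbI.1 with heq | hlt
    · rw [← heq] at hbTb
      exact absurd hbTb.2 (not_le.2 hc)
    · exact hlt
  have hgtb : ∀ s, t ≤ s → s < b → C < F s := by
    intro s h1 h2
    by_contra hcon
    push_neg at hcon
    exact absurd (csInf_le hTb_bdd ⟨⟨h1, le_trans h2.le hbI.2⟩, hcon⟩) (not_le.2 h2)
  have hbIcc : b ∈ Set.Icc (0:ℝ) γ.len := ⟨le_trans ht0 hbI.1, hbI.2⟩
  have hbC : C ≤ F b := by
    apply le_of_forall_pos_le_add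
    intro ε hε
    set s := max t (b - ε) with hs
    have hs1 : s < b := max_lt hblt (by linarith)
    have hs2 : t ≤ s := le_max_left _ _
    have hsIcc : s ∈ Set.Icc (0:ℝ) γ.len := ⟨le_trans ht0 hs2, le_trans hs1.le hbI.2⟩
    have hFs : C < F s := hgtb s hs2 hs1
    have hlips : F s ≤ F b + |s - b| := infDist_f_le γ X hsIcc hbIcc
    rw [abs_of_nonpos (by linarith)] at hlips
    have : b - s ≤ ε := by
      have := le_max_right t (b - ε)
      simp only [hs] at *
      linarith
    linarith
  have hab : a ≤ b := le_trans haI.2 hbI.1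
  -- all parameters in [a, b] are C-far
  have hmid : ∀ s, a ≤ s → s ≤ b → C ≤ F s := by
    intro s h1 h2
    rcases eq_or_lt_of_le h1 with rfl | h1'
    · exact haC
    rcases eq_or_lt_of_le h2 with rfl | h2'
    · exact hbC
    rcases le_or_gt s t with h3 | h3
    · exact (hgta s h1' h3).le
    · exact (hgtb s h3.le h2').le
  -- apply the contraction property to the restricted geodesic
  set seg := restrict γ a b haI.1 hab hbIcc.2 with hseg
  have hfar : ∀ p ∈ seg.image, C ≤ infDist p X := by
    rintro p ⟨u, hu, rfl⟩
    have hu' : u ∈ Set.Icc (0:ℝ) (b - a) := hu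
    exact hmid (a + u) (by linarith [hu'.1]) (by linarith [hu'.2])
  obtain ⟨xa, hxa⟩ := hproj (γ.f a)
  obtain ⟨xb, hxb⟩ := hproj (γ.f b)
  have hdab : dist xa xb ≤ C :=
    dist_proj_le h hne seg hfar
      (mem_restrict_image γ haI.1 hab hbIcc.2 ⟨le_rfl, hab⟩)
      (mem_restrict_image γ haI.1 hab hbIcc.2 ⟨hab, le_rfl⟩) hxa hxb
  have hd1 : dist (γ.f a) xa = F a := hxa.2
  have hd2 : dist (γ.f b) xb = F b := hxb.2
  have hdfab : dist (γ.f a) (γ.f b) = b - a := by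
    rw [dist_f γ haIcc hbIcc, abs_of_nonpos (by linarith)]
    ring
  have htri : dist (γ.f a) (γ.f b) ≤ dist (γ.f a) xa + dist xa xb + dist xb (γ.f b) :=
    dist_triangle4 _ _ _ _
  rw [dist_comm xb] at htri
  have hFa_le : F a ≤ C := haTa.2
  have hFb_le : F b ≤ C := hbTb.2
  have hba3 : b - a ≤ 3 * C := by
    rw [hdfab] at htri
    linarith
  have hfin : F t ≤ F a + |t - a| := infDist_f_le γ X ⟨ht0, htlen⟩ haIcc
  rw [abs_of_nonneg (by linarith)] at hfin
  have hFt : F t = infDist (γ.f t) X := rfl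
  linarith

/-- The image of a contracting set under a bijective isometry is contracting. -/
theorem contracting_image {φ ψ : Y → Y} (hφ : Isometry φ) (hψ : Isometry ψ)
    (h1 : ∀ y, ψ (φ y) = y) (h2 : ∀ y, φ (ψ y) = y) {C : ℝ} {X : Set Y}
    (h : IsContractingWith C X) : IsContractingWith C (φ '' X) := by
  intro γ hfar
  set γ' : GeodesicSegment Y :=
    ⟨γ.len, γ.len_nonneg, fun t => ψ (γ.f t), by
      intro s hs t ht
      rw [hψ.dist_eq]
      exact γ.isom s hs t ht⟩ with hγ'
  have himg : γ'.image = ψ '' γ.image := by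
    simp only [GeodesicSegment.image, hγ', Set.image_image]
  have hXeq : ψ '' (φ '' X) = X := by
    rw [Set.image_image]
    simp only [h1, Set.image_id']
  have hfar' : ∀ p ∈ γ'.image, C ≤ infDist p X := by
    intro p hp
    rw [himg] at hp
    obtain ⟨q, hq, rfl⟩ := hp
    have : infDist (ψ q) X = infDist q (φ '' X) := by
      conv_lhs => rw [← hXeq]
      exact Metric.infDist_image hψ
    rw [this]
    exact hfar q hq
  have hd := h γ' hfar'
  have hps : projSet (φ '' X) γ.image = φ '' projSet X γ'.image := by
    ext x
    simp only [projSet, Set.mem_iUnion, Set.mem_image, himg]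
    constructor
    · rintro ⟨q, hq, hx⟩
      have hq' : q = φ (ψ q) := (h2 q).symm
      rw [hq', proj_image hφ] at hx
      obtain ⟨u, hu, rfl⟩ := hx
      exact ⟨u, ⟨ψ q, ⟨q, hq, rfl⟩, hu⟩, rfl⟩
    · rintro ⟨u, ⟨w, ⟨q, hq, rfl⟩, hu⟩, rfl⟩
      refine ⟨q, hq, ?_⟩
      have hq' : q = φ (ψ q) := (h2 q).symm
      rw [hq', proj_image hφ]
      exact ⟨u, hu, rfl⟩
  rw [hps, hφ.diam_image]
  exact hd

end ContrAux
namespace ContrAux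

variable {Y : Type*} [MetricSpace Y]

open Metric Set Bornology

theorem source_mem_image (γ : GeodesicSegment Y) : γ.source ∈ γ.image :=
  ⟨0, ⟨le_rfl, γ.len_nonneg⟩, rfl⟩

theorem target_mem_image (γ : GeodesicSegment Y) : γ.target ∈ γ.image :=
  ⟨γ.len, ⟨γ.len_nonneg, le_rfl⟩, rfl⟩

theorem len_eq_dist (γ : GeodesicSegment Y) : γ.len = dist γ.source γ.target := by
  have h := dist_f γ (⟨le_rfl, γ.len_nonneg⟩ : (0:ℝ) ∈ Set.Icc (0:ℝ) γ.len)
    ⟨γ.len_nonneg, le_rfl⟩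
  rw [show γ.source = γ.f 0 from rfl, show γ.target = γ.f γ.len from rfl, h,
    abs_of_nonpos (by linarith [γ.len_nonneg])]
  ring

/-- A set at bounded Hausdorff distance from a contracting set is contracting. -/
theorem contracting_of_close {C r : ℝ} (hC : 1 ≤ C) (hr : 0 ≤ r) {X X' : Set Y}
    (hgeo : GeodesicSpace Y) (hXX' : X ⊆ X') (h : IsContractingWith C X)
    (hne : X.Nonempty) (hprojX : ∀ y : Y, ∃ x, x ∈ proj X y)
    (hclose : ∀ y ∈ X', infDist y X ≤ r) :
    IsContractingWith (7 * C + 2 * r) X' := by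
  intro γ hfar
  have hmono : ∀ p : Y, infDist p X' ≤ infDist p X :=
    fun p => Metric.infDist_le_infDist_of_subset hXX' hne
  have hfarX : ∀ p ∈ γ.image, C ≤ infDist p X := by
    intro p hp
    have := hfar p hp
    have := hmono p
    linarith
  -- key claim: projections to X' are close to projections to X
  have key : ∀ a ∈ γ.image, ∀ p ∈ proj X' a, ∀ xa ∈ proj X a, dist xa p ≤ 3 * C + r := by
    intro a ha p hp xa hxa
    obtain ⟨δ, hδs, hδt⟩ := hgeo a p
    have h0I : (0:ℝ) ∈ Set.Icc (0:ℝ) δ.len := ⟨le_rfl, δ.len_nonneg⟩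
    have hlI : δ.len ∈ Set.Icc (0:ℝ) δ.len := ⟨δ.len_nonneg, le_rfl⟩
    have hlen : δ.len = dist a p := by rw [len_eq_dist δ, hδs, hδt]
    have haim : a ∈ δ.image := hδs ▸ source_mem_image δ
    have hpim : p ∈ δ.image := hδt ▸ target_mem_image δ
    have hf0a : δ.f 0 = a := hδs
    have hxa0 : xa ∈ proj X (δ.f 0) := by rw [hf0a]; exact hxa
    have hdap : dist a p = infDist a X' := hp.2
    have hdaxa : dist a xa = infDist a X := hxa.2
    have hle : dist a p ≤ dist a xa := by rw [hdap, hdaxa]; exact hmono a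
    set F : ℝ → ℝ := fun s => infDist (δ.f s) X with hF
    by_cases hcase : ∀ t ∈ Set.Icc (0:ℝ) δ.len, C ≤ F t
    · obtain ⟨xp, hxp⟩ := hprojX p
      have hfard : ∀ q ∈ δ.image, C ≤ infDist q X := by rintro q ⟨t, htI, rfl⟩; exact hcase t htI
      have h1 : dist xa xp ≤ C := dist_proj_le h hne δ hfard haim hpim hxa hxp
      have h2 : dist p xp = infDist p X := hxp.2
      have h3 : infDist p X ≤ r := hclose p hp.1
      have h4 : dist xa p ≤ dist xa xp + dist xp p := dist_triangle _ _ _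
      rw [dist_comm xp p] at h4
      linarith
    · push_neg at hcase
      obtain ⟨t0, ht0I, ht0⟩ := hcase
      set T : Set ℝ := Set.Icc (0:ℝ) δ.len ∩ F ⁻¹' (Set.Iic C) with hT
      have hT_closed : IsClosed T :=
        ContinuousOn.preimage_isClosed_of_isClosed (F_continuousOn δ X) isClosed_Icc isClosed_Iic
      have hT_ne : T.Nonempty := ⟨t0, ht0I, ht0.le⟩
      have hT_bdd : BddBelow T := ⟨0, fun s hs => hs.1.1⟩
      set t1 := sInf T with ht1
      have ht1T : t1 ∈ T := hT_closed.csInf_mem hT_ne hT_bdd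
      have ht1I : t1 ∈ Set.Icc (0:ℝ) δ.len := ht1T.1
      have ht1F : F t1 ≤ C := ht1T.2
      have hbefore : ∀ s, 0 ≤ s → s < t1 → C < F s := by
        intro s h1 h2
        by_contra hcon
        push_neg at hcon
        exact absurd (csInf_le hT_bdd ⟨⟨h1, le_trans h2.le ht1I.2⟩, hcon⟩) (not_le.2 h2)
      have ht1C : C ≤ F t1 := by
        rcases eq_or_lt_of_le ht1I.1 with heq | hpos
        · have hF0 : F 0 = infDist a X := by show infDist (δ.f 0) X = _; rw [hf0a]
          rw [← heq, hF0]
          exact hfarX a ha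
        · apply le_of_forall_pos_le_add
          intro ε hε
          set s := max 0 (t1 - ε) with hs
          have hs1 : s < t1 := max_lt hpos (by linarith)
          have hs2 : 0 ≤ s := le_max_left _ _
          have hsI : s ∈ Set.Icc (0:ℝ) δ.len := ⟨hs2, le_trans hs1.le ht1I.2⟩
          have hFs : C < F s := hbefore s hs2 hs1
          have hlips : F s ≤ F t1 + |s - t1| := infDist_f_le δ X hsI ht1I
          rw [abs_of_nonpos (by linarith)] at hlips
          have hsε : t1 - s ≤ ε := by
            have := le_max_right 0 (t1 - ε)
            simp only [hs] at *
            linarith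
          linarith
      set seg := restrict δ 0 t1 le_rfl ht1I.1 ht1I.2 with hseg
      have hfarseg : ∀ q ∈ seg.image, C ≤ infDist q X := by
        rintro q ⟨u, hu, rfl⟩
        have hu' : u ∈ Set.Icc (0:ℝ) (t1 - 0) := hu
        show C ≤ infDist (δ.f (0 + u)) X
        rw [zero_add]
        rcases eq_or_lt_of_le hu'.2 with heq | hlt
        · rw [show u = t1 by linarith]
          exact ht1C
        · exact (hbefore u hu'.1 (by linarith)).le
      obtain ⟨z, hz⟩ := hprojX (δ.f t1)
      have hmem0 : δ.f 0 ∈ seg.image := by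
        have := mem_restrict_image δ le_rfl ht1I.1 ht1I.2 (⟨le_rfl, ht1I.1⟩ : (0:ℝ) ∈ Set.Icc (0:ℝ) t1)
        exact this
      have hmem1 : δ.f t1 ∈ seg.image :=
        mem_restrict_image δ le_rfl ht1I.1 ht1I.2 ⟨ht1I.1, le_rfl⟩
      have h1 : dist xa z ≤ C := dist_proj_le h hne seg hfarseg hmem0 hmem1 hxa0 hz
      have h2 : dist (δ.f t1) z = F t1 := hz.2
      have h3 : dist (δ.f t1) p = δ.len - t1 := by
        rw [show p = δ.f δ.len from hδt.symm, dist_f δ ht1I hlI,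
          abs_of_nonpos (by linarith [ht1I.2])]
        ring
      have h5 : dist a (δ.f t1) = t1 := by
        rw [show a = δ.f 0 from hf0a.symm, dist_f δ h0I ht1I,
          abs_of_nonpos (by linarith [ht1I.1])]
        ring
      have h6 : infDist a X ≤ dist a z := Metric.infDist_le_dist_of_mem hz.1
      have h7 : dist a z ≤ dist a (δ.f t1) + dist (δ.f t1) z := dist_triangle _ _ _
      have h8 : δ.len - t1 ≤ C := by
        rw [hlen] at *
        rw [h5, h2] at h7
        linarith
      have h9 : dist xa p ≤ dist xa z + dist z (δ.f t1) + dist (δ.f t1) p := dist_triangle4 _ _ _ _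
      rw [dist_comm z (δ.f t1)] at h9
      linarith
  -- conclude the diameter bound
  apply Metric.diam_le_of_forall_dist_le (by linarith)
  intro p hp q hq
  simp only [projSet, Set.mem_iUnion] at hp hq
  obtain ⟨a, ha, hpa⟩ := hp
  obtain ⟨b, hb, hqb⟩ := hq
  obtain ⟨xa, hxa⟩ := hprojX a
  obtain ⟨xb, hxb⟩ := hprojX b
  have h1 : dist xa xb ≤ C := dist_proj_le h hne γ hfarX ha hb hxa hxb
  have h2 : dist xa p ≤ 3 * C + r := key a ha p hpa xa hxa
  have h3 : dist xb q ≤ 3 * C + r := key b hb q hqb xb hxb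
  have h4 : dist p q ≤ dist p xa + dist xa xb + dist xb q := dist_triangle4 _ _ _ _
  rw [dist_comm p xa] at h4
  linarith

end ContrAux

open ContrAux


/-- a contracting subgroup has finite index in its normalizer,
and the normalizer is contracting. -/
theorem contracting_subgroup_normalizer
    {Y G : Type*} [MetricSpace Y] [ProperSpace Y] [Group G] [MulAction G Y]
    (hgeo : GeodesicSpace Y)
    (hiso : ∀ g : G, Isometry (fun y : Y => g • y))
    (o : Y)
    (hproper : ∀ r : ℝ, {g : G | dist o (g • o) ≤ r}.Finite)
    (H : Subgroup G)
    (hHinf : (H : Set G).Infinite)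
    (hHc : IsContracting ((fun g : G => g • o) '' (H : Set G))) :
    H.relIndex (Subgroup.normalizer (H : Set G)) ≠ 0 ∧
      IsContracting ((fun g : G => g • o) '' ((Subgroup.normalizer (H : Set G)) : Set G)) := by
  obtain ⟨C, hC1, hCX⟩ := hHc
  have hC0 : (0:ℝ) < C := lt_of_lt_of_le one_pos hC1
  set X : Set Y := (fun g : G => g • o) '' (H : Set G) with hX
  have hXne : X.Nonempty := ⟨(1:G) • o, ⟨1, H.one_mem, rfl⟩⟩
  -- local finiteness of orbit-type sets
  have horbfin : ∀ (S : Set G) (y : Y) (r : ℝ),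
      {x ∈ (fun g : G => g • o) '' S | dist y x ≤ r}.Finite := by
    intro S y r
    apply Set.Finite.subset (((hproper (r + dist o y)).image (fun g : G => g • o)))
    rintro x ⟨⟨g, _, rfl⟩, hd⟩
    refine ⟨g, ?_, rfl⟩
    have h1 : dist o (g • o) ≤ dist o y + dist y (g • o) := dist_triangle _ _ _
    simp only [Set.mem_setOf_eq]
    linarith
  have hXfin : ∀ y : Y, ∀ r : ℝ, {x ∈ X | dist y x ≤ r}.Finite := fun y r => horbfin _ y r
  have hXproj : ∀ y : Y, ∃ x, x ∈ proj X y := exists_proj hXne hXfin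
  -- unboundedness of the orbit of H
  have hunb : ∀ r : ℝ, ∃ h ∈ H, r < dist o (h • o) := by
    intro r
    by_contra hcon
    push_neg at hcon
    exact hHinf (Set.Finite.subset (hproper r) hcon)
  -- invariance of X under H
  have hXinv : ∀ h' : G, h' ∈ H → (fun y : Y => h' • y) '' X = X := by
    intro h' hh'
    rw [hX, Set.image_image]
    ext x
    constructor
    · rintro ⟨g, hg, rfl⟩
      exact ⟨h' * g, H.mul_mem hh' hg, (mul_smul h' g o)⟩
    · rintro ⟨g, hg, rfl⟩
      refine ⟨h'⁻¹ * g, H.mul_mem (H.inv_mem hh') hg, ?_⟩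
      show h' • (h'⁻¹ * g) • o = g • o
      rw [mul_smul, smul_inv_smul]
  -- main distance bound for elements of the normalizer
  have main : ∀ g : G, g ∈ (Subgroup.normalizer (H : Set G)) → Metric.infDist (g • o) X ≤ 5 * C := by
    intro g hg
    set R := Metric.infDist (g • o) X with hR
    by_contra hcon
    push_neg at hcon
    -- every point of g•X is at distance exactly R from X
    have hgX : ∀ h' : G, h' ∈ H → Metric.infDist ((g * h') • o) X = R := by
      intro h' hh'
      have hmemN : g * h' * g⁻¹ ∈ H := (Subgroup.mem_normalizer_iff.1 hg h').1 hh'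
      have heq : (g * h') • o = (g * h' * g⁻¹) • (g • o) := by
        rw [smul_smul]
        congr 1
        group
      rw [heq]
      calc Metric.infDist ((g * h' * g⁻¹) • (g • o)) X
          = Metric.infDist ((g * h' * g⁻¹) • (g • o)) ((fun y : Y => (g * h' * g⁻¹) • y) '' X) := by
            rw [hXinv _ hmemN]
        _ = Metric.infDist (g • o) X := Metric.infDist_image (hiso _)
        _ = R := rfl
    obtain ⟨h1, hh1, hdist1⟩ := hunb (2 * R + C)
    obtain ⟨α, hαs, hαt⟩ := hgeo o (h1 • o)
    set β : GeodesicSegment Y :=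
      ⟨α.len, α.len_nonneg, fun t => g • α.f t, by
        intro s hs t ht
        rw [(hiso g).dist_eq]
        exact α.isom s hs t ht⟩ with hβ
    have hβ0I : (0:ℝ) ∈ Set.Icc (0:ℝ) β.len := ⟨le_rfl, β.len_nonneg⟩
    have hβlI : β.len ∈ Set.Icc (0:ℝ) β.len := ⟨β.len_nonneg, le_rfl⟩
    have hβs : β.f 0 = g • o := by
      show g • α.f 0 = g • o
      rw [show α.f 0 = o from hαs]
    have hβt : β.f β.len = g • (h1 • o) := by
      show g • α.f α.len = g • (h1 • o)
      rw [show α.f α.len = h1 • o from hαt]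
    have hgXcon : IsContractingWith C ((fun y : Y => g • y) '' X) :=
      contracting_image (hiso g) (hiso g⁻¹) (fun y => inv_smul_smul g y)
        (fun y => smul_inv_smul g y) hCX
    have hgXeq : (fun y : Y => g • y) '' X
        = (fun k : G => k • o) '' ((fun h' : G => g * h') '' (H : Set G)) := by
      rw [hX, Set.image_image, Set.image_image]
      apply Set.image_congr
      intro h' _
      exact (mul_smul g h' o).symm
    have hgXne : ((fun y : Y => g • y) '' X).Nonempty := hXne.image _
    have hgXproj : ∀ y : Y, ∃ x, x ∈ proj ((fun y : Y => g • y) '' X) y := by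
      apply exists_proj hgXne
      intro y r
      rw [hgXeq]
      exact horbfin _ y r
    have hgXR : ∀ p ∈ (fun y : Y => g • y) '' X, Metric.infDist p X = R := by
      rintro p ⟨x, ⟨h', hh', rfl⟩, rfl⟩
      show Metric.infDist (g • h' • o) X = R
      rw [← mul_smul]
      exact hgX h' hh'
    have hlenβ : β.len = dist o (h1 • o) := by
      show α.len = _
      rw [len_eq_dist α, hαs, hαt]
    have hdistβ : dist (β.f 0) (β.f β.len) = β.len := by
      rw [dist_f β hβ0I hβlI, abs_of_nonpos (by linarith [β.len_nonneg])]
      ring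
    by_cases hcase : ∀ p ∈ β.image, C ≤ Metric.infDist p X
    · obtain ⟨xa, hxa⟩ := hXproj (β.f 0)
      obtain ⟨xb, hxb⟩ := hXproj (β.f β.len)
      have hC' : dist xa xb ≤ C :=
        dist_proj_le hCX hXne β hcase (source_mem_image β) (target_mem_image β) hxa hxb
      have hda : dist (β.f 0) xa = R := by rw [hxa.2, hβs]
      have hdb : dist (β.f β.len) xb = R := by
        rw [hxb.2, hβt]
        exact hgXR _ ⟨h1 • o, ⟨h1, hh1, rfl⟩, rfl⟩
      have hdb' : dist xb (β.f β.len) = R := by rw [dist_comm]; exact hdb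
      have htri : dist (β.f 0) (β.f β.len)
          ≤ dist (β.f 0) xa + dist xa xb + dist xb (β.f β.len) := dist_triangle4 _ _ _ _
      rw [hdistβ] at htri
      rw [hda, hdb'] at htri
      rw [hlenβ] at htri
      linarith
    · push_neg at hcase
      obtain ⟨p, hpim, hpC⟩ := hcase
      have hβsrc : β.source ∈ (fun y : Y => g • y) '' X := by
        show β.f 0 ∈ _
        rw [hβs]
        exact ⟨o, ⟨1, H.one_mem, one_smul G o⟩, rfl⟩
      have hβtgt : β.target ∈ (fun y : Y => g • y) '' X := by
        show β.f β.len ∈ _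
        rw [hβt]
        exact ⟨h1 • o, ⟨h1, hh1, rfl⟩, rfl⟩
      have hquasi := quasiconvex hC1 hgXcon hgXproj β hβsrc hβtgt
      obtain ⟨t, htI, rfl⟩ := hpim
      have h4C : Metric.infDist (β.f t) ((fun y : Y => g • y) '' X) ≤ 4 * C := hquasi t htI
      obtain ⟨q, hq⟩ := hgXproj (β.f t)
      have hdq : dist (β.f t) q ≤ 4 * C := by rw [hq.2]; exact h4C
      have hqR : Metric.infDist q X = R := hgXR q hq.1
      have hfin : Metric.infDist q X ≤ Metric.infDist (β.f t) X + dist q (β.f t) :=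
        Metric.infDist_le_infDist_add_dist
      rw [hqR, dist_comm q] at hfin
      linarith
  -- finite index
  have hHN : H ≤ (Subgroup.normalizer (H : Set G)) := Subgroup.le_normalizer
  have hrep : ∀ g : G, g ∈ (Subgroup.normalizer (H : Set G)) →
      ∃ k : G, dist o (k • o) ≤ 5 * C ∧ k ∈ (Subgroup.normalizer (H : Set G)) ∧ ∃ h' ∈ H, g = k * h' := by
    intro g hg
    have hginv : g⁻¹ ∈ (Subgroup.normalizer (H : Set G)) := (Subgroup.normalizer (H : Set G)).inv_mem hg
    obtain ⟨x, hxmem, hxd⟩ := hXproj (g⁻¹ • o)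
    obtain ⟨h', hh', rfl⟩ := hxmem
    have hd5 : dist (g⁻¹ • o) (h' • o) ≤ 5 * C := by
      rw [hxd]
      exact main g⁻¹ hginv
    have heq : dist o ((g * h') • o) = dist (g⁻¹ • o) (h' • o) := by
      rw [mul_smul]
      have hdeq := (hiso g⁻¹).dist_eq o (g • h' • o)
      simp only [inv_smul_smul] at hdeq
      exact hdeq.symm
    refine ⟨g * h', by rw [heq]; exact hd5,
      (Subgroup.normalizer (H : Set G)).mul_mem hg (hHN hh'), h'⁻¹, H.inv_mem hh', by group⟩
  have hfinq : Finite ((Subgroup.normalizer (H : Set G)) ⧸ H.subgroupOf (Subgroup.normalizer (H : Set G))) := by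
    set s : Set (Subgroup.normalizer (H : Set G)) := {x : (Subgroup.normalizer (H : Set G)) | (x : G) ∈ {k : G | dist o (k • o) ≤ 5 * C}}
      with hs
    have hsfin : s.Finite :=
      Set.Finite.preimage (Subtype.val_injective.injOn) (hproper (5 * C))
    have : Finite s := hsfin.to_subtype
    apply Finite.of_surjective (fun k : s => (QuotientGroup.mk k.1 :
      (Subgroup.normalizer (H : Set G)) ⧸ H.subgroupOf (Subgroup.normalizer (H : Set G))))
    intro q
    induction q using QuotientGroup.induction_on with
    | H g =>
      obtain ⟨k, hk5, hkN, h', hh', hgkh⟩ := hrep g.1 g.2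
      refine ⟨⟨⟨k, hkN⟩, hk5⟩, ?_⟩
      rw [QuotientGroup.eq]
      rw [Subgroup.mem_subgroupOf]
      show k⁻¹ * (g : G) ∈ H
      rw [hgkh]
      simpa using hh'
  refine ⟨?_, ?_⟩
  · have : (H.subgroupOf (Subgroup.normalizer (H : Set G))).index ≠ 0 := Subgroup.index_ne_zero_of_finite
    exact this
  · refine ⟨7 * C + 2 * (5 * C), by linarith, ?_⟩
    exact contracting_of_close hC1 (by linarith) hgeo (Set.image_mono hHN) hCX hXne hXproj
      (by rintro y ⟨g, hg, rfl⟩; exact main g hg)
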